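/- arXiv:2405.18201 — 2 statements merged into one kernel-verified Lean document; each statement's English description precedes it below -/
import Mathlib

section
/- Let k be an infinite field, d a natural number, and f ∈ k[x, y] a homogeneous polynomial of degree d in two variables. Then f satisfies f(x, y + t·x) = f(x, y) (as polynomials) for every t ∈ k if and only if f = c·x^d for some c ∈ k. In particular, the k-subspace of homogeneous degree-d forms invariant under all such substitutions is one-dimensional when f is allowed to range over scalars c ≠ 0. -/
open MvPolynomial

private lemma eval_mul_of_isHomogeneous {k : Type*} [CommSemiring k] {σ : Type*}
    {φ : MvPolynomial σ k} {n : ℕ} (hφ : φ.IsHomogeneous n) (r : k) (x : σ → k) :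
    eval (fun i => r * x i) φ = r ^ n * eval x φ := by
  conv_lhs => rw [← φ.support_sum_monomial_coeff]
  conv_rhs => rw [← φ.support_sum_monomial_coeff]
  rw [map_sum, map_sum, Finset.mul_sum]
  apply Finset.sum_congr rfl
  intro m hm
  have hd : ∑ i ∈ m.support, m i = n := by
    have := hφ (mem_support_iff.mp hm)
    simpa [Finsupp.weight_apply, Finsupp.sum] using this
  rw [eval_monomial, eval_monomial, Finsupp.prod, Finsupp.prod]
  simp_rw [mul_pow]
  rw [Finset.prod_mul_distrib, Finset.prod_pow_eq_pow_sum, hd]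
  ring

/-- Over an infinite field, a homogeneous form `f` of degree `d` in two variables is
invariant under all substitutions `(x, y) ↦ (x, y + t·x)` iff `f = c·x^d`. -/
theorem homogeneous_translation_invariant_iff
    (k : Type*) [Field k] [Infinite k] (d : ℕ)
    (f : MvPolynomial (Fin 2) k) (hf : f.IsHomogeneous d) :
    (∀ t : k, MvPolynomial.bind₁ ![X 0, X 1 + C t * X 0] f = f) ↔
      ∃ c : k, f = C c * X 0 ^ d := by
  constructor
  · intro h
    set c := eval ![1, (0 : k)] f with hc
    refine ⟨c, ?_⟩
    have key : ∀ u v t : k, eval ![u, v + t * u] f = eval ![u, v] f := by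
      intro u v t
      have h2 := congrArg (eval ![u, v]) (h t)
      rw [show (eval ![u, v] : MvPolynomial (Fin 2) k →+* k) = eval₂Hom (RingHom.id k) ![u, v]
        from rfl, eval₂Hom_bind₁] at h2
      have hfun : (fun i => eval₂Hom (RingHom.id k) ![u, v] (![X 0, X 1 + C t * X 0] i))
          = ![u, v + t * u] := by
        funext i
        fin_cases i <;> simp
      rw [hfun] at h2
      exact h2
    have h1 : ∀ w : k, eval ![1, w] f = c := by
      intro w
      have := key 1 0 w
      simpa using this
    set g := f - C c * X 0 ^ d with hg
    have hne : ∀ u v : k, u ≠ 0 → eval ![u, v] g = 0 := by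
      intro u v hu
      have hs := eval_mul_of_isHomogeneous hf u ![1, v / u]
      have hfun : (fun i => u * (![1, v / u]) i) = ![u, v] := by
        funext i
        fin_cases i <;> simp [mul_div_cancel₀ _ hu]
      rw [hfun, h1] at hs
      simp [hg, hs, mul_comm]
    have hzero : ∀ x : Fin 2 → k, eval x g = 0 := by
      intro x
      set P : Polynomial k := eval₂ Polynomial.C ![Polynomial.X, Polynomial.C (x 1)] g with hP
      have hPe : ∀ u : k, P.eval u = eval ![u, x 1] g := by
        intro u
        rw [hP, polynomial_eval_eval₂]
        rw [show eval ![u, x 1] g = eval₂ (RingHom.id k) ![u, x 1] g from rfl]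
        congr 1
        · ext r; simp
        · funext i; fin_cases i <;> simp
      have hP0 : P = 0 := by
        apply Polynomial.eq_zero_of_infinite_isRoot
        apply Set.Infinite.mono (s := {u : k | u ≠ 0})
        · intro u hu
          simpa [Polynomial.IsRoot, hPe u] using hne u (x 1) hu
        · exact (Set.finite_singleton (0 : k)).infinite_compl
      have hx : ![x 0, x 1] = x := by
        funext i; fin_cases i <;> rfl
      have := hPe (x 0)
      rw [hP0, hx] at this
      simpa using this.symm
    have : g = 0 := by
      apply MvPolynomial.funext
      intro x
      simp [hzero x]
    rw [hg, sub_eq_zero] at this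
    exact this
  · rintro ⟨c, rfl⟩ t
    simp [map_mul, map_pow, bind₁_C_right, bind₁_X_right]
end

section
/- Let G be a nilpotent group and U a proper subgroup of G. Let Z(U) denote the center of U regarded as a subgroup of G (i.e., the set of u ∈ U commuting with every element of U). Then the normalizer of Z(U) in G strictly contains U. -/
lemma normalizer_le_normalizer_center (G : Type*) [Group G] (U : Subgroup G) :
    Subgroup.normalizer (U : Set G) ≤ Subgroup.normalizer ((U ⊓ Subgroup.centralizer (U : Set G) : Subgroup G) : Set G) := by
  intro g hg
  rw [Subgroup.mem_normalizer_iff] at hg ⊢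
  intro x
  simp only [Subgroup.mem_inf, Subgroup.mem_centralizer_iff]
  constructor
  · rintro ⟨hxU, hxC⟩
    refine ⟨(hg x).mp hxU, ?_⟩
    intro s hs
    have hs' : g⁻¹ * s * g ∈ U := by
      have := (hg (g⁻¹ * s * g)).mpr
      apply this
      group
      simpa using hs
    have := hxC _ hs'
    have h2 : g * ((g⁻¹ * s * g) * x) * g⁻¹ = g * (x * (g⁻¹ * s * g)) * g⁻¹ := by rw [this]
    calc s * (g * x * g⁻¹) = g * ((g⁻¹ * s * g) * x) * g⁻¹ := by group
      _ = g * (x * (g⁻¹ * s * g)) * g⁻¹ := h2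
      _ = (g * x * g⁻¹) * s := by group
  · rintro ⟨hxU, hxC⟩
    refine ⟨(hg x).mpr hxU, ?_⟩
    intro s hs
    have hs' : g * s * g⁻¹ ∈ U := (hg s).mp hs
    have := hxC _ hs'
    -- (g*s*g⁻¹) * (g*x*g⁻¹) = (g*x*g⁻¹) * (g*s*g⁻¹)
    have h2 : g⁻¹ * ((g * s * g⁻¹) * (g * x * g⁻¹)) * g =
        g⁻¹ * ((g * x * g⁻¹) * (g * s * g⁻¹)) * g := by rw [this]
    calc s * x = g⁻¹ * ((g * s * g⁻¹) * (g * x * g⁻¹)) * g := by group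
      _ = g⁻¹ * ((g * x * g⁻¹) * (g * s * g⁻¹)) * g := h2
      _ = x * s := by group

/-- In a nilpotent group, the normalizer of the center of a proper subgroup `U`
strictly contains `U`. -/
theorem normalizer_center_of_proper_subgroup_lt
    (G : Type*) [Group G] [Group.IsNilpotent G]
    (U : Subgroup G) (hU : U ≠ ⊤) :
    U < Subgroup.normalizer ((U ⊓ Subgroup.centralizer (U : Set G) : Subgroup G) : Set G) := by
  have h1 : U < Subgroup.normalizer (U : Set G) := normalizerCondition_of_isNilpotent U (lt_top_iff_ne_top.mpr hU)
  exact lt_of_lt_of_le h1 (normalizer_le_normalizer_center G U)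
end
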